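/- If λ : [0,T] → [0,∞) is integrable and F̄, Ḡ : [0,∞) → [0,1] are nonincreasing with ρ₀ ∈ [0,1], then any measurable function ρ : [0,T] → ℝ satisfying ρ(t) = ρ₀·Ḡ(t) + ∫₀ᵗ 𝟙{ρ(u)<1}·F̄(t−u)·λ(u) du for all t ∈ [0,T] takes values in [0,1]. -/

import Mathlib

open MeasureTheory Set

theorem stmt_0 (T : ℝ) (hT : 0 < T) (lam F G ρ : ℝ → ℝ) (ρ0 : ℝ)
    (hlam_int : IntegrableOn lam (Icc 0 T))
    (hlam_nonneg : ∀ u ∈ Icc (0:ℝ) T, 0 ≤ lam u)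
    (hF_mono : AntitoneOn F (Ici 0))
    (hF_range : ∀ x ∈ Ici (0:ℝ), F x ∈ Icc (0:ℝ) 1)
    (hG_mono : AntitoneOn G (Ici 0))
    (hG_range : ∀ x ∈ Ici (0:ℝ), G x ∈ Icc (0:ℝ) 1)
    (hρ0 : ρ0 ∈ Icc (0:ℝ) 1)
    (hρ_meas : Measurable ρ)
    (heq : ∀ t ∈ Icc (0:ℝ) T,
      ρ t = ρ0 * G t + ∫ u in (0:ℝ)..t, (if ρ u < 1 then F (t - u) * lam u else 0)) :
    ∀ t ∈ Icc (0:ℝ) T, ρ t ∈ Icc (0:ℝ) 1 := by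
  have hAm : MeasurableSet {u : ℝ | ρ u < 1} := measurableSet_lt hρ_meas measurable_const
  set q : ℝ → ℝ := fun u => if ρ u < 1 then lam u else 0 with hq_def
  have hq_eq : q = Set.indicator {u : ℝ | ρ u < 1} lam := by
    ext u; by_cases h : ρ u < 1 <;> simp [hq_def, Set.indicator, h]
  have hq_int : IntegrableOn q (Icc 0 T) := by
    rw [hq_eq]; exact hlam_int.indicator hAm
  have hq_ii : ∀ a b : ℝ, 0 ≤ a → a ≤ b → b ≤ T → IntervalIntegrable q volume a b := by
    intro a b ha hab hbT
    rw [intervalIntegrable_iff_integrableOn_Icc_of_le hab]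
    exact hq_int.mono_set (Icc_subset_Icc ha hbT)
  -- the modified integrand, with globally monotone kernel
  set g : ℝ → ℝ → ℝ := fun s u => if ρ u < 1 then F (max (s - u) 0) * lam u else 0 with hg_def
  have hFmax_mono : ∀ s : ℝ, Monotone (fun u => F (max (s - u) 0)) := by
    intro s u v huv
    exact hF_mono (mem_Ici.mpr (le_max_right _ _)) (mem_Ici.mpr (le_max_right _ _)) (max_le_max (by linarith) le_rfl)
  have hFmax_mem : ∀ s u : ℝ, F (max (s - u) 0) ∈ Icc (0:ℝ) 1 :=
    fun s u => hF_range _ (mem_Ici.mpr (le_max_right _ _))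
  have hg_int : ∀ s : ℝ, IntegrableOn (g s) (Icc 0 T) := by
    intro s
    have hgm : AEStronglyMeasurable (g s) (volume.restrict (Icc 0 T)) := by
      have : g s = Set.indicator {u : ℝ | ρ u < 1} (fun u => F (max (s - u) 0) * lam u) := by
        ext u; by_cases h : ρ u < 1 <;> simp [hg_def, Set.indicator, h]
      rw [this]
      exact (((hFmax_mono s).measurable.aestronglyMeasurable).mul
        hlam_int.aestronglyMeasurable).indicator hAm
    refine Integrable.mono hlam_int hgm (ae_of_all _ fun u => ?_)
    by_cases h : ρ u < 1
    · simp only [hg_def, if_pos h, Real.norm_eq_abs, abs_mul]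
      have h1 := hFmax_mem s u
      calc |F (max (s - u) 0)| * |lam u| ≤ 1 * |lam u| := by
            refine mul_le_mul_of_nonneg_right ?_ (abs_nonneg _)
            rw [abs_le]; constructor <;> linarith [h1.1, h1.2]
        _ = |lam u| := one_mul _
    · simp [hg_def, if_neg h, abs_nonneg]
  have hg_ii : ∀ s a b : ℝ, 0 ≤ a → a ≤ b → b ≤ T → IntervalIntegrable (g s) volume a b := by
    intro s a b ha hab hbT
    rw [intervalIntegrable_iff_integrableOn_Icc_of_le hab]
    exact (hg_int s).mono_set (Icc_subset_Icc ha hbT)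
  -- rewrite the equation with the modified kernel
  have hρ_eq : ∀ s ∈ Icc (0:ℝ) T, ρ s = ρ0 * G s + ∫ u in (0:ℝ)..s, g s u := by
    intro s hs
    rw [heq s hs]
    congr 1
    rw [intervalIntegral.integral_of_le hs.1, intervalIntegral.integral_of_le hs.1]
    refine setIntegral_congr_fun measurableSet_Ioc fun u hu => ?_
    have : max (s - u) 0 = s - u := max_eq_left (by linarith [hu.2])
    simp only [hg_def, this]
  -- primitive of q
  set H : ℝ → ℝ := fun s => ∫ u in (0:ℝ)..s, q u with hH_def
  -- key inequality
  have key : ∀ s t : ℝ, 0 ≤ s → s ≤ t → t ≤ T → ρ t ≤ ρ s + (H t - H s) := by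
    intro s t hs0 hst htT
    have ht0 : (0:ℝ) ≤ t := le_trans hs0 hst
    have hsT : s ≤ T := le_trans hst htT
    have e1 : ∫ u in (0:ℝ)..t, g t u = (∫ u in (0:ℝ)..s, g t u) + ∫ u in s..t, g t u :=
      (intervalIntegral.integral_add_adjacent_intervals (hg_ii t 0 s le_rfl hs0 hsT)
        (hg_ii t s t hs0 hst htT)).symm
    have e2 : ∫ u in (0:ℝ)..s, g t u ≤ ∫ u in (0:ℝ)..s, g s u := by
      refine intervalIntegral.integral_mono_on hs0 (hg_ii t 0 s le_rfl hs0 hsT)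
        (hg_ii s 0 s le_rfl hs0 hsT) fun u hu => ?_
      by_cases h : ρ u < 1
      · simp only [hg_def, if_pos h]
        refine mul_le_mul_of_nonneg_right ?_ (hlam_nonneg u ⟨hu.1, le_trans hu.2 hsT⟩)
        exact hF_mono (mem_Ici.mpr (le_max_right _ _)) (mem_Ici.mpr (le_max_right _ _)) (max_le_max (by linarith) le_rfl)
      · simp [hg_def, if_neg h]
    have e3 : ∫ u in s..t, g t u ≤ ∫ u in s..t, q u := by
      refine intervalIntegral.integral_mono_on hst (hg_ii t s t hs0 hst htT)
        (hq_ii s t hs0 hst htT) fun u hu => ?_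
      by_cases h : ρ u < 1
      · simp only [hg_def, hq_def, if_pos h]
        exact mul_le_of_le_one_left (hlam_nonneg u ⟨le_trans hs0 hu.1, le_trans hu.2 htT⟩)
          (hFmax_mem t u).2
      · simp [hg_def, hq_def, if_neg h]
    have e4 : H s + ∫ u in s..t, q u = H t :=
      intervalIntegral.integral_add_adjacent_intervals (hq_ii 0 s le_rfl hs0 hsT)
        (hq_ii s t hs0 hst htT)
    have e5 : ρ0 * G t ≤ ρ0 * G s :=
      mul_le_mul_of_nonneg_left (hG_mono hs0 ht0 hst) hρ0.1
    rw [hρ_eq t ⟨ht0, htT⟩, hρ_eq s ⟨hs0, hsT⟩]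
    linarith
  intro t ht
  obtain ⟨ht0, htT⟩ := ht
  constructor
  · -- nonnegativity
    rw [heq t ⟨ht0, htT⟩]
    have h1 : 0 ≤ ρ0 * G t := mul_nonneg hρ0.1 (hG_range t ht0).1
    have h2 : 0 ≤ ∫ u in (0:ℝ)..t, (if ρ u < 1 then F (t - u) * lam u else 0) := by
      refine intervalIntegral.integral_nonneg ht0 fun u hu => ?_
      by_cases h : ρ u < 1
      · rw [if_pos h]
        exact mul_nonneg (hF_range _ (by simp; linarith [hu.2])).1
          (hlam_nonneg u ⟨hu.1, le_trans hu.2 htT⟩)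
      · rw [if_neg h]
    linarith
  · -- upper bound, by contradiction
    by_contra hgt
    push_neg at hgt
    set ε : ℝ := ρ t - 1 with hε_def
    have hε : 0 < ε := by simp [hε_def]; linarith
    -- membership criterion
    have crit : ∀ u, 0 ≤ u → u ≤ t → ρ u < 1 → ε < H t - H u := by
      intro u hu0 hut hρu
      have := key u t hu0 hut htT
      simp only [hε_def]; linarith
    set S : Set ℝ := {s ∈ Icc 0 t | ε ≤ H t - H s} with hS_def
    have hScases : S.Nonempty ∨ S = ∅ := by
      rcases eq_empty_or_nonempty S with h | h
      · exact Or.inr h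
      · exact Or.inl h
    rcases hScases with hSne | hSemp
    · -- S nonempty: use sSup
      have hHcont : ContinuousOn H (Icc 0 t) := by
        have : IntegrableOn q (uIcc 0 t) := by
          rw [uIcc_of_le ht0]
          exact hq_int.mono_set (Icc_subset_Icc le_rfl htT)
        exact intervalIntegral.continuousOn_primitive_interval this |>.congr (fun x hx => rfl)
          |>.mono (by rw [uIcc_of_le ht0])
      have hScl : IsClosed S := by
        have : S = Icc 0 t ∩ H ⁻¹' (Iic (H t - ε)) := by
          ext s; simp only [hS_def, mem_sep_iff, mem_inter_iff, mem_preimage, mem_Iic]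
          constructor
          · rintro ⟨h1, h2⟩; exact ⟨h1, by linarith⟩
          · rintro ⟨h1, h2⟩; exact ⟨h1, by linarith⟩
        rw [this]
        exact hHcont.preimage_isClosed_of_isClosed isClosed_Icc isClosed_Iic
      have hScomp : IsCompact S :=
        IsCompact.of_isClosed_subset isCompact_Icc hScl (fun s hs => hs.1)
      set s₁ : ℝ := sSup S with hs₁_def
      have hs₁S : s₁ ∈ S := hScomp.sSup_mem hSne
      have hs₁0 : 0 ≤ s₁ := hs₁S.1.1
      have hs₁t : s₁ ≤ t := hs₁S.1.2
      have hqz : ∀ u ∈ Ioc s₁ t, q u = 0 := by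
        intro u hu
        have hu0 : 0 ≤ u := le_trans hs₁0 hu.1.le
        have hunS : u ∉ S := fun huS => absurd (le_csSup hScomp.bddAbove huS) (not_le.mpr hu.1)
        have : ¬ ρ u < 1 := by
          intro hρu
          exact hunS ⟨⟨hu0, hu.2⟩, (crit u hu0 hu.2 hρu).le⟩
        simp [hq_def, this]
      have hint0 : ∫ u in s₁..t, q u = 0 := by
        rw [intervalIntegral.integral_of_le hs₁t]
        rw [setIntegral_congr_fun measurableSet_Ioc hqz]
        simp
      have e4 : H s₁ + ∫ u in s₁..t, q u = H t :=
        intervalIntegral.integral_add_adjacent_intervals (hq_ii 0 s₁ le_rfl hs₁0 (le_trans hs₁t htT))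
          (hq_ii s₁ t hs₁0 hs₁t htT)
      have : ε ≤ H t - H s₁ := hs₁S.2
      rw [← e4, hint0] at this
      linarith
    · -- S empty: ρ ≥ 1 on [0,t], so the integral vanishes
      have hρge : ∀ u ∈ Icc (0:ℝ) t, ¬ ρ u < 1 := by
        intro u hu hρu
        have : u ∈ S := ⟨hu, (crit u hu.1 hu.2 hρu).le⟩
        rw [hSemp] at this
        exact this
      have hzero : ∫ u in (0:ℝ)..t, (if ρ u < 1 then F (t - u) * lam u else 0) = 0 := by
        rw [intervalIntegral.integral_of_le ht0]
        rw [setIntegral_congr_fun measurableSet_Ioc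
          (fun u hu => if_neg (hρge u ⟨hu.1.le, hu.2⟩))]
        simp
      have : ρ t = ρ0 * G t := by rw [heq t ⟨ht0, htT⟩, hzero, add_zero]
      have hle1 : ρ0 * G t ≤ 1 :=
        mul_le_one₀ hρ0.2 (hG_range t ht0).1 (hG_range t ht0).2
      linarith
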